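/- Let θ > 0, ρ > 0, r = ρθ/(1+θ)², and G_n(θ) = ∫_0^{1/(1+θ)} zⁿ (1/(1+θ) − z)^r exp(−ρz/(1+θ)) dz. Then G_n satisfies the homogeneous recurrence ρ G_{n+1} − [(n+1)(1+θ) + ρ] G_n + n G_{n−1} = 0 for all n ≥ 1. -/

import Mathlib

open Set MeasureTheory intervalIntegral

theorem G_recurrence (ρ θ : ℝ) (hρ : 0 < ρ) (hθ : 0 < θ)
    (G : ℕ → ℝ)
    (hG : ∀ n : ℕ, G n = ∫ z in (0 : ℝ)..(1 / (1 + θ)),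
      z ^ n * (1 / (1 + θ) - z) ^ (ρ * θ / (1 + θ) ^ 2) * Real.exp (-ρ * z / (1 + θ))) :
    ∀ n : ℕ, 1 ≤ n →
      ρ * G (n + 1) - (((n : ℝ) + 1) * (1 + θ) + ρ) * G n + (n : ℝ) * G (n - 1) = 0 := by
  intro n hn
  obtain ⟨m, rfl⟩ : ∃ m, n = m + 1 := ⟨n - 1, (Nat.succ_pred_eq_of_pos hn).symm⟩
  have hθ1 : (0:ℝ) < 1 + θ := by linarith
  set c : ℝ := 1 / (1 + θ) with hc
  set r : ℝ := ρ * θ / (1 + θ) ^ 2 with hr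
  have hc0 : 0 < c := by rw [hc]; positivity
  have hr0 : 0 < r := by rw [hr]; positivity
  set g : ℕ → ℝ → ℝ := fun k z => z ^ k * (c - z) ^ r * Real.exp (-ρ * z / (1 + θ)) with hg
  have hIG : ∀ k, G k = ∫ z in (0:ℝ)..c, g k z := fun k => hG k
  -- continuity of rpow
  have hrpow : ∀ s : ℝ, 0 < s → Continuous fun x : ℝ => x ^ s := by
    intro s hs
    rw [continuous_iff_continuousAt]
    intro x
    exact Real.continuousAt_rpow_const x s (Or.inr hs.le)
  have hgcont : ∀ k, Continuous (g k) := by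
    intro k
    apply Continuous.mul
    · exact (continuous_pow k).mul ((hrpow r hr0).comp (continuous_const.sub continuous_id))
    · exact Real.continuous_exp.comp (by continuity)
  have hgint : ∀ k, IntervalIntegrable (g k) volume 0 c :=
    fun k => (hgcont k).intervalIntegrable 0 c
  set A : ℝ := ((m:ℝ) + 2) + r + ρ * c ^ 2 with hA
  set H : ℝ → ℝ := fun z => z ^ (m+1) * (c - z) ^ (r+1) * Real.exp (-ρ * z / (1 + θ)) with hH
  set f : ℝ → ℝ := fun z => ρ * c * g (m+2) z - A * g (m+1) z + ((m:ℝ)+1) * c * g m z with hf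
  have hHderiv : ∀ z ∈ Ioo (0:ℝ) c, HasDerivAt H (f z) z := by
    intro z hz
    have hzc : 0 < c - z := sub_pos.mpr hz.2
    have h1 : HasDerivAt (fun x : ℝ => x ^ (m+1)) (((m:ℝ)+1) * z ^ m) z := by
      simpa using hasDerivAt_pow (m+1) z
    have hsub : HasDerivAt (fun x : ℝ => c - x) (-1) z := by
      simpa using (hasDerivAt_id' z).const_sub c
    have h2 : HasDerivAt (fun x : ℝ => (c - x) ^ (r+1)) (-((r+1) * (c - z) ^ r)) z := by
      have := hsub.rpow_const (p := r+1) (Or.inl hzc.ne')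
      convert this using 1
      rw [add_sub_cancel_right]; ring
    have hlin : HasDerivAt (fun x : ℝ => -ρ * x / (1+θ)) (-ρ/(1+θ)) z := by
      simpa using ((hasDerivAt_id z).const_mul (-ρ)).div_const (1+θ)
    have h3 : HasDerivAt (fun x : ℝ => Real.exp (-ρ * x / (1+θ)))
        (Real.exp (-ρ * z / (1+θ)) * (-ρ/(1+θ))) z := hlin.exp
    have htot : HasDerivAt H _ z := (h1.mul h2).mul h3
    convert htot using 1
    have hw : (c - z) ^ (r+1) = (c - z) ^ r * (c - z) := Real.rpow_add_one hzc.ne' r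
    simp only [hf, hg, hA, hw, Pi.mul_apply]
    rw [hc]
    field_simp
    ring
  have hHcont : ContinuousOn H (Icc 0 c) := by
    apply Continuous.continuousOn
    apply Continuous.mul
    · exact (continuous_pow (m+1)).mul
        ((hrpow (r+1) (by linarith)).comp (continuous_const.sub continuous_id))
    · exact Real.continuous_exp.comp (by continuity)
  have hfint : IntervalIntegrable f volume 0 c :=
    (((hgint (m+2)).const_mul _).sub ((hgint (m+1)).const_mul _)).add ((hgint m).const_mul _)
  have hFTC : ∫ z in (0:ℝ)..c, f z = H c - H 0 :=
    intervalIntegral.integral_eq_sub_of_hasDerivAt_of_le hc0.le hHcont hHderiv hfint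
  have hHc : H c = 0 := by
    simp [hH, Real.zero_rpow (by linarith : r + 1 ≠ 0)]
  have hH0 : H 0 = 0 := by
    simp [hH]
  have hsplit : ∫ z in (0:ℝ)..c, f z
      = ρ * c * (∫ z in (0:ℝ)..c, g (m+2) z) - A * (∫ z in (0:ℝ)..c, g (m+1) z)
        + ((m:ℝ)+1) * c * (∫ z in (0:ℝ)..c, g m z) := by
    simp only [hf]
    rw [intervalIntegral.integral_add (((hgint (m+2)).const_mul _).sub ((hgint (m+1)).const_mul _))
        ((hgint m).const_mul _),
      intervalIntegral.integral_sub ((hgint (m+2)).const_mul _) ((hgint (m+1)).const_mul _),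
      intervalIntegral.integral_const_mul, intervalIntegral.integral_const_mul,
      intervalIntegral.integral_const_mul]
  have key : ρ * c * G (m+2) - A * G (m+1) + ((m:ℝ)+1) * c * G m = 0 := by
    rw [hIG (m+2), hIG (m+1), hIG m, ← hsplit, hFTC, hHc, hH0, sub_zero]
  rw [hA, hr, hc] at key
  field_simp at key
  have hne : ((1+θ):ℝ)^3 ≠ 0 := by positivity
  have hgoal : ((1+θ):ℝ)^3 * (ρ * G (m+2) - (((m:ℝ)+2)*(1+θ)+ρ) * G (m+1) + ((m:ℝ)+1) * G m) = 0 := by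
    linear_combination (1+θ)^2 * key
  have hz := (mul_eq_zero.mp hgoal).resolve_left hne
  have hm2 : m + 1 + 1 = m + 2 := rfl
  have hm1 : m + 1 - 1 = m := rfl
  rw [hm2, hm1]
  push_cast
  linarith [hz]
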